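/- Let n ≥ 3. For every regular n-gon with center c, circumradius R > 0 and orientation θ, and every point M in its plane with L = |M − c|, one has max(R², L²) = (1/2)·(S_n^{(2)} + √(3·(S_n^{(2)})² − 2·S_n^{(4)})) and min(R², L²) = (1/2)·(S_n^{(2)} − √(3·(S_n^{(2)})² − 2·S_n^{(4)})); thus the n distances d_0,…,d_{n−1} determine the unordered pair {R², L²}. -/

import Mathlib

open Complex Real Finset

theorem max_min_R_sq_L_sq (n : ℕ) (hn : 3 ≤ n)
    (c M : ℂ) (R θ : ℝ) (hR : 0 < R) (L : ℝ) (hL : L = ‖M - c‖)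
    (S2 S4 : ℝ)
    (hS2 : S2 = (1 / n : ℝ) * ∑ k ∈ Finset.range n,
        (‖M - (c + R * Complex.exp (Complex.I * ((2 * π * k / n + θ : ℝ) : ℂ)))‖) ^ 2)
    (hS4 : S4 = (1 / n : ℝ) * ∑ k ∈ Finset.range n,
        (‖M - (c + R * Complex.exp (Complex.I * ((2 * π * k / n + θ : ℝ) : ℂ)))‖) ^ 4) :
    max (R ^ 2) (L ^ 2) = (1 / 2) * (S2 + Real.sqrt (3 * S2 ^ 2 - 2 * S4))
      ∧ min (R ^ 2) (L ^ 2) = (1 / 2) * (S2 - Real.sqrt (3 * S2 ^ 2 - 2 * S4)) := by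
  have hnR : (n : ℝ) ≠ 0 := by exact_mod_cast (by omega : n ≠ 0)
  -- roots of unity setup
  set ζ : ℂ := Complex.exp (2 * π * I / n) with hζdef
  set s : ℂ := (R : ℂ) * Complex.exp (I * θ) with hsdef
  set w : ℂ := M - c with hwdef
  have hprim := Complex.isPrimitiveRoot_exp n (by omega)
  have hζn : ζ ^ n = 1 := hprim.pow_eq_one
  have hζ1 : ζ ≠ 1 := hprim.ne_one (by omega)
  have hζ2 : ζ ^ 2 ≠ 1 := hprim.pow_ne_one_of_pos_of_lt two_ne_zero (by omega)
  have hP : ∑ k ∈ range n, ζ ^ k = 0 := by rw [geom_sum_eq hζ1, hζn]; simp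
  have hQ : ∑ k ∈ range n, (ζ ^ 2) ^ k = 0 := by
    rw [geom_sum_eq hζ2]
    have : (ζ ^ 2) ^ n = 1 := by rw [← pow_mul, mul_comm, pow_mul, hζn, one_pow]
    rw [this]; simp
  set χ : ℂ := starRingEnd ℂ ζ with hχdef
  set cw : ℂ := starRingEnd ℂ w with hcwdef
  set cs : ℂ := starRingEnd ℂ s with hcsdef
  have hPc : ∑ k ∈ range n, χ ^ k = 0 := by
    have := congrArg (starRingEnd ℂ) hP
    simpa [map_sum, map_pow] using this
  have hQc : ∑ k ∈ range n, (χ ^ 2) ^ k = 0 := by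
    have := congrArg (starRingEnd ℂ) hQ
    simpa [map_sum, map_pow] using this
  have hζχ : ζ * χ = 1 := by
    rw [hχdef, Complex.mul_conj]
    have habs : ‖ζ‖ = 1 := by simp [hζdef, Complex.norm_exp]
    rw [Complex.normSq_eq_norm_sq, habs]; norm_num
  -- rewrite the vertices
  have hf : ∀ k : ℕ, M - (c + R * Complex.exp (Complex.I * ((2 * π * k / n + θ : ℝ) : ℂ)))
      = w - s * ζ ^ k := by
    intro k
    have h1 : (Complex.I * ((2 * π * k / n + θ : ℝ) : ℂ)) = I * θ + (k : ℕ) * (2 * π * I / n) := by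
      push_cast
      field_simp
      ring
    rw [h1, Complex.exp_add, Complex.exp_nat_mul, hζdef, hsdef, hwdef]
    ring
  -- normSq facts
  have hw2 : w * cw = (L : ℂ) ^ 2 := by
    rw [hcwdef, Complex.mul_conj, hL]
    norm_cast
    rw [Complex.normSq_eq_norm_sq]
  have hs2 : s * cs = (R : ℂ) ^ 2 := by
    rw [hcsdef, Complex.mul_conj, hsdef]
    norm_cast
    simp [Complex.normSq_mul, Complex.normSq_eq_norm_sq, Complex.norm_exp]
  have hconj : ∀ k : ℕ, starRingEnd ℂ (w - s * ζ ^ k) = cw - cs * χ ^ k := by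
    intro k; simp [map_sub, map_mul, map_pow, hcwdef, hcsdef, hχdef]
  -- complex sum identities
  have key2 : ∀ k : ℕ, (w - s * ζ ^ k) * (cw - cs * χ ^ k)
      = (w * cw + s * cs) - w * cs * χ ^ k - cw * s * ζ ^ k := by
    intro k
    have h1 : ζ ^ k * χ ^ k = 1 := by rw [← mul_pow, hζχ, one_pow]
    linear_combination s * cs * h1
  have hE2 : ∑ k ∈ range n, (w - s * ζ ^ k) * (cw - cs * χ ^ k)
      = n * (w * cw + s * cs) := by
    simp only [key2]
    rw [Finset.sum_sub_distrib, Finset.sum_sub_distrib, ← Finset.mul_sum, ← Finset.mul_sum,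
      hP, hPc, Finset.sum_const, Finset.card_range]
    simp only [nsmul_eq_mul]
    ring
  have key4 : ∀ k : ℕ, ((w - s * ζ ^ k) * (cw - cs * χ ^ k)) ^ 2
      = ((w * cw + s * cs) ^ 2 + 2 * (w * cw) * (s * cs))
        + w ^ 2 * cs ^ 2 * (χ ^ 2) ^ k + cw ^ 2 * s ^ 2 * (ζ ^ 2) ^ k
        - 2 * (w * cw + s * cs) * (w * cs) * χ ^ k
        - 2 * (w * cw + s * cs) * (cw * s) * ζ ^ k := by
    intro k
    have h1 : ζ ^ k * χ ^ k = 1 := by rw [← mul_pow, hζχ, one_pow]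
    have h2 : (χ ^ 2) ^ k = χ ^ k * χ ^ k := by rw [← pow_mul, two_mul, pow_add]
    have h3 : (ζ ^ 2) ^ k = ζ ^ k * ζ ^ k := by rw [← pow_mul, two_mul, pow_add]
    rw [h2, h3]
    linear_combination (cs ^ 2 * s ^ 2 * (ζ ^ k * χ ^ k + 1) + 4 * w * cw * s * cs
      - 2 * w * s * cs ^ 2 * χ ^ k - 2 * cw * s ^ 2 * cs * ζ ^ k) * h1
  have hE4 : ∑ k ∈ range n, ((w - s * ζ ^ k) * (cw - cs * χ ^ k)) ^ 2
      = n * ((w * cw + s * cs) ^ 2 + 2 * (w * cw) * (s * cs)) := by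
    simp only [key4]
    rw [Finset.sum_sub_distrib, Finset.sum_sub_distrib, Finset.sum_add_distrib,
      Finset.sum_add_distrib, ← Finset.mul_sum, ← Finset.mul_sum, ← Finset.mul_sum,
      ← Finset.mul_sum, hP, hPc, hQ, hQc, Finset.sum_const, Finset.card_range]
    simp only [nsmul_eq_mul]
    ring
  -- extract the real identities
  have c2 : ∀ z : ℂ, ((‖z‖ ^ 2 : ℝ) : ℂ) = z * starRingEnd ℂ z := by
    intro z; rw [Complex.sq_norm, Complex.mul_conj]
  have c4 : ∀ z : ℂ, ((‖z‖ ^ 4 : ℝ) : ℂ) = (z * starRingEnd ℂ z) ^ 2 := by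
    intro z
    rw [show (4 : ℕ) = 2 * 2 from rfl, pow_mul, Complex.sq_norm, Complex.mul_conj]
    push_cast; ring
  have hS2' : S2 = L ^ 2 + R ^ 2 := by
    have hsum : ((∑ k ∈ range n, ‖w - s * ζ ^ k‖ ^ 2 : ℝ) : ℂ)
        = ((n * (L ^ 2 + R ^ 2) : ℝ) : ℂ) := by
      rw [Complex.ofReal_sum]
      calc ∑ k ∈ range n, ((‖w - s * ζ ^ k‖ ^ 2 : ℝ) : ℂ)
          = ∑ k ∈ range n, (w - s * ζ ^ k) * (cw - cs * χ ^ k) := by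
            refine Finset.sum_congr rfl fun k _ => ?_
            rw [c2, hconj]
        _ = n * (w * cw + s * cs) := hE2
        _ = ((n * (L ^ 2 + R ^ 2) : ℝ) : ℂ) := by rw [hw2, hs2]; push_cast; ring
    have hsumR : ∑ k ∈ range n, ‖w - s * ζ ^ k‖ ^ 2 = n * (L ^ 2 + R ^ 2) :=
      Complex.ofReal_inj.mp hsum
    rw [hS2]
    simp only [hf]
    rw [hsumR]
    field_simp
  have hS4' : S4 = (L ^ 2 + R ^ 2) ^ 2 + 2 * (L ^ 2 * R ^ 2) := by
    have hsum : ((∑ k ∈ range n, ‖w - s * ζ ^ k‖ ^ 4 : ℝ) : ℂ)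
        = ((n * ((L ^ 2 + R ^ 2) ^ 2 + 2 * (L ^ 2 * R ^ 2)) : ℝ) : ℂ) := by
      rw [Complex.ofReal_sum]
      calc ∑ k ∈ range n, ((‖w - s * ζ ^ k‖ ^ 4 : ℝ) : ℂ)
          = ∑ k ∈ range n, ((w - s * ζ ^ k) * (cw - cs * χ ^ k)) ^ 2 := by
            refine Finset.sum_congr rfl fun k _ => ?_
            rw [c4, hconj]
        _ = n * ((w * cw + s * cs) ^ 2 + 2 * (w * cw) * (s * cs)) := hE4
        _ = ((n * ((L ^ 2 + R ^ 2) ^ 2 + 2 * (L ^ 2 * R ^ 2)) : ℝ) : ℂ) := by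
            rw [hw2, hs2]; push_cast; ring
    have hsumR : ∑ k ∈ range n, ‖w - s * ζ ^ k‖ ^ 4
        = n * ((L ^ 2 + R ^ 2) ^ 2 + 2 * (L ^ 2 * R ^ 2)) := Complex.ofReal_inj.mp hsum
    rw [hS4]
    simp only [hf]
    rw [hsumR]
    field_simp
  -- final algebra
  have h3 : 3 * S2 ^ 2 - 2 * S4 = (R ^ 2 - L ^ 2) ^ 2 := by rw [hS2', hS4']; ring
  rw [h3, Real.sqrt_sq_eq_abs]
  rcases le_total (L ^ 2) (R ^ 2) with h | h
  · rw [_root_.abs_of_nonneg (by linarith), max_eq_left h, min_eq_right h, hS2']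
    constructor <;> ring
  · rw [_root_.abs_of_nonpos (by linarith), max_eq_right h, min_eq_left h, hS2']
    constructor <;> ring
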